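/- Let g ∈ ℝ^d, let ‖·‖_(1), …, ‖·‖_(k) be norms on ℝ^d with positive weights λ = (λ_1, …, λ_k), and let x0 ∈ ℝ^d with x0 ≠ 0. Then the Euclidean distance of g to the cone generated by the subdifferential of the weighted sum norm at x0 satisfies: dist(g, cone ∂‖·‖_sum,λ(x0)) = min over τ ≥ 0 and x_1, …, x_k ∈ ℝ^d of ‖g − Σ_{i=1}^k x_i‖₂ subject to Σ_{i=1}^k ⟨x_i, x0⟩ = τ·‖x0‖_sum,λ and ‖x_i‖_(i)° ≤ τ·λ_i for all i ∈ [k]. -/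

import Mathlib

open MeasureTheory ProbabilityTheory
open scoped RealInnerProductSpace BigOperators Pointwise

noncomputable section

/-- Euclidean space `ℝ^d`. -/
abbrev E (d : ℕ) := EuclideanSpace ℝ (Fin d)

/-- `f` is a norm on `ℝ^d`. -/
def IsNorm {d : ℕ} (f : E d → ℝ) : Prop :=
  (∀ x y, f (x + y) ≤ f x + f y) ∧ (∀ (a : ℝ) (x : E d), f (a • x) = |a| * f x) ∧
    (∀ x, x ≠ 0 → 0 < f x)

/-- The cone generated by a set: `cone S = {τ x : x ∈ S, τ > 0}`. -/
def posCone {d : ℕ} (S : Set (E d)) : Set (E d) := {x | ∃ τ : ℝ, 0 < τ ∧ ∃ s ∈ S, x = τ • s}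

/-- The dual norm `f°(y) = sup {⟨x, y⟩ : f(x) ≤ 1}`. -/
def dualNorm {d : ℕ} (f : E d → ℝ) (y : E d) : ℝ := sSup ((fun x => ⟪x, y⟫) '' {x | f x ≤ 1})

/-- The subdifferential of a convex function `f` at `x`. -/
def subdiff {d : ℕ} (f : E d → ℝ) (x : E d) : Set (E d) :=
  {y | ∀ z, f x + ⟪y, z - x⟫ ≤ f z}

/-- The circular cone with axis `x` and angle `θ`:
`circ(x, θ) = {z : ⟨z, x⟩ ≥ cos(θ) ‖z‖₂ ‖x‖₂}`. -/
def circCone {d : ℕ} (x : E d) (θ : ℝ) : Set (E d) :=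
  {z | Real.cos θ * (‖z‖ * ‖x‖) ≤ ⟪z, x⟫}

/-- The descent cone of `f` at `x`. -/
def descentCone {d : ℕ} (f : E d → ℝ) (x : E d) : Set (E d) := posCone {y | f (x + y) ≤ f x}

/-- The polar of a cone. -/
def polarCone {d : ℕ} (K : Set (E d)) : Set (E d) := {y | ∀ x ∈ K, ⟪y, x⟫ ≤ 0}

/-- The standard Gaussian measure `N(0, Id_d)` on `ℝ^d`. -/
def stdGaussian (d : ℕ) : Measure (E d) :=
  (Measure.pi fun _ : Fin d => gaussianReal 0 1).map (MeasurableEquiv.toLp 2 (Fin d → ℝ))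

/-- The statistical dimension of a cone `K ⊆ ℝ^d`:  `δ(K) = E_g[dist(g, K°)²]`. -/
def statDim {d : ℕ} (K : Set (E d)) : ℝ :=
  ∫ g, (Metric.infDist g (polarCone K))^2 ∂(stdGaussian d)

/-- A seminorm-like function: subadditive and absolutely homogeneous. -/
def IsSemi {d : ℕ} (f : E d → ℝ) : Prop :=
  (∀ x y, f (x + y) ≤ f x + f y) ∧ (∀ (a : ℝ) (x : E d), f (a • x) = |a| * f x)

variable {d : ℕ}

lemma IsSemi.zero {f : E d → ℝ} (h : IsSemi f) : f 0 = 0 := by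
  have := h.2 0 0; simpa using this

lemma IsSemi.neg' {f : E d → ℝ} (h : IsSemi f) (x : E d) : f (-x) = f x := by
  have := h.2 (-1) x; simpa using this

lemma IsSemi.nonneg {f : E d → ℝ} (h : IsSemi f) (x : E d) : 0 ≤ f x := by
  have h1 := h.1 x (-x)
  rw [add_neg_cancel, h.zero, h.neg'] at h1; linarith

lemma IsSemi.sum_le {f : E d → ℝ} (h : IsSemi f) {ι : Type*} (s : Finset ι) (g : ι → E d) :
    f (∑ i ∈ s, g i) ≤ ∑ i ∈ s, f (g i) := by
  classical
  induction s using Finset.cons_induction with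
  | empty => simp [h.zero]
  | cons a s ha ih =>
    rw [Finset.sum_cons, Finset.sum_cons]
    exact (h.1 _ _).trans (by linarith)

lemma IsSemi.exists_upper {f : E d → ℝ} (h : IsSemi f) :
    ∃ C : ℝ, 0 ≤ C ∧ ∀ x, f x ≤ C * ‖x‖ := by
  classical
  set b := EuclideanSpace.basisFun (Fin d) ℝ with hb
  refine ⟨∑ i, f (b i), Finset.sum_nonneg fun i _ => h.nonneg _, fun x => ?_⟩
  have hx : x = ∑ i, x i • b i := by
    have := b.sum_repr x
    simp only [hb, EuclideanSpace.basisFun_repr] at this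
    exact this.symm
  calc f x = f (∑ i, x i • b i) := by rw [← hx]
    _ ≤ ∑ i, f (x i • b i) := h.sum_le _ _
    _ = ∑ i, |x i| * f (b i) := by simp [h.2]
    _ ≤ ∑ i, ‖x‖ * f (b i) := by
        refine Finset.sum_le_sum fun i _ => ?_
        have h1 : |x i| ≤ ‖x‖ := by
          have h2 := abs_real_inner_le_norm (b i) x
          have h3 : ⟪b i, x⟫ = x i := by
            simp [hb, EuclideanSpace.basisFun_apply, EuclideanSpace.inner_single_left]
          have h4 : ‖b i‖ = 1 := by
            simp [hb, EuclideanSpace.basisFun_apply, EuclideanSpace.norm_single]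
          rw [h3, h4, one_mul] at h2
          exact h2
        exact mul_le_mul_of_nonneg_right h1 (h.nonneg _)
    _ = (∑ i, f (b i)) * ‖x‖ := by rw [← Finset.mul_sum, mul_comm]

lemma IsSemi.continuous {f : E d → ℝ} (h : IsSemi f) : Continuous f := by
  obtain ⟨C, hC0, hC⟩ := h.exists_upper
  have : LipschitzWith (Real.toNNReal C) f := by
    refine LipschitzWith.of_dist_le_mul fun x y => ?_
    rw [Real.dist_eq, dist_eq_norm, Real.coe_toNNReal _ hC0]
    have h1 : f x - f y ≤ f (x - y) := by
      have := h.1 (x - y) y; simp only [sub_add_cancel] at this; linarith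
    have h2 : f y - f x ≤ f (x - y) := by
      have := h.1 (y - x) x; simp only [sub_add_cancel] at this
      have hn : f (y - x) = f (x - y) := by rw [← h.neg' (x - y), neg_sub]
      linarith
    have h3 := hC (x - y)
    rw [abs_sub_le_iff]
    exact ⟨h1.trans h3, h2.trans h3⟩
  exact this.continuous

lemma IsNorm.isSemi {f : E d → ℝ} (h : IsNorm f) : IsSemi f := ⟨h.1, h.2.1⟩

/-- Every norm on a finite-dimensional space is bounded below by a multiple of the
Euclidean norm. -/
lemma IsNorm.exists_lower {f : E d → ℝ} (h : IsNorm f) :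
    ∃ c : ℝ, 0 < c ∧ ∀ x, c * ‖x‖ ≤ f x := by
  by_cases hd : ∀ x : E d, x = 0
  · exact ⟨1, one_pos, fun x => by rw [hd x]; simp [h.isSemi.zero]⟩
  push_neg at hd
  obtain ⟨w, hw⟩ := hd
  have hsne : (Metric.sphere (0 : E d) 1).Nonempty := by
    refine ⟨‖w‖⁻¹ • w, ?_⟩
    have hw0 : ‖w‖ ≠ 0 := norm_ne_zero_iff.2 hw
    simp [norm_smul, abs_of_nonneg (inv_nonneg.2 (norm_nonneg w)), inv_mul_cancel₀ hw0]
  obtain ⟨z, hzs, hzmin⟩ := (isCompact_sphere (0 : E d) 1).exists_isMinOn hsne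
    h.isSemi.continuous.continuousOn
  have hz1 : ‖z‖ = 1 := by simpa using hzs
  have hzne : z ≠ 0 := by intro hz; rw [hz] at hz1; simp at hz1
  refine ⟨f z, h.2.2 z hzne, fun x => ?_⟩
  rcases eq_or_ne x 0 with rfl | hx
  · simp [h.isSemi.zero]
  · have hxn : (0:ℝ) < ‖x‖ := norm_pos_iff.2 hx
    have hmem : ‖x‖⁻¹ • x ∈ Metric.sphere (0 : E d) 1 := by
      simp [norm_smul, abs_of_nonneg (inv_nonneg.2 (norm_nonneg x)),
        inv_mul_cancel₀ hxn.ne']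
    have hval : f (‖x‖⁻¹ • x) = ‖x‖⁻¹ * f x := by
      rw [h.2.1, abs_of_nonneg (inv_nonneg.2 (norm_nonneg x))]
    have h5 : f z ≤ ‖x‖⁻¹ * f x := by
      have h6 : f z ≤ f (‖x‖⁻¹ • x) := hzmin hmem
      rw [hval] at h6; exact h6
    calc f z * ‖x‖ ≤ (‖x‖⁻¹ * f x) * ‖x‖ :=
          mul_le_mul_of_nonneg_right h5 (norm_nonneg x)
      _ = f x := by field_simp


section Dual

variable {d : ℕ}

lemma dualNorm_bddAbove {f : E d → ℝ} (h : IsNorm f) (y : E d) :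
    BddAbove ((fun x => ⟪x, y⟫) '' {x | f x ≤ 1}) := by
  obtain ⟨c, hc, hlow⟩ := h.exists_lower
  refine ⟨c⁻¹ * ‖y‖, ?_⟩
  rintro _ ⟨x, hx, rfl⟩
  have h1 : ‖x‖ ≤ c⁻¹ := by
    have h2 : c * ‖x‖ ≤ 1 := (hlow x).trans hx
    nlinarith [mul_inv_cancel₀ hc.ne']
  calc ⟪x, y⟫ ≤ ‖x‖ * ‖y‖ := real_inner_le_norm x y
    _ ≤ c⁻¹ * ‖y‖ := mul_le_mul_of_nonneg_right h1 (norm_nonneg y)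

lemma dualNorm_le {f : E d → ℝ} (hsemi : IsSemi f) {y : E d} {b : ℝ} (hb : 0 ≤ b)
    (h : ∀ x, f x ≤ 1 → ⟪x, y⟫ ≤ b) : dualNorm f y ≤ b := by
  refine Real.sSup_le ?_ hb
  rintro _ ⟨x, hx, rfl⟩
  exact h x hx

lemma inner_le_dualNorm_mul {f : E d → ℝ} (h : IsNorm f) (y z : E d) :
    ⟪z, y⟫ ≤ dualNorm f y * f z := by
  have hd0 : 0 ≤ dualNorm f y := by
    refine le_csSup (dualNorm_bddAbove h y) ?_
    exact ⟨0, by simp [h.isSemi.zero], by simp⟩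
  rcases eq_or_ne z 0 with rfl | hz
  · simp [h.isSemi.zero]
  · have hfz : 0 < f z := h.2.2 z hz
    have hmem : (f z)⁻¹ • z ∈ {x | f x ≤ 1} := by
      simp only [Set.mem_setOf_eq, h.2.1, abs_of_nonneg (inv_nonneg.2 hfz.le)]
      rw [inv_mul_cancel₀ hfz.ne']
    have h1 : ⟪(f z)⁻¹ • z, y⟫ ≤ dualNorm f y :=
      le_csSup (dualNorm_bddAbove h y) ⟨_, hmem, rfl⟩
    rw [real_inner_smul_left] at h1
    calc ⟪z, y⟫ = (f z) * ((f z)⁻¹ * ⟪z, y⟫) := by field_simp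
      _ ≤ (f z) * dualNorm f y := mul_le_mul_of_nonneg_left h1 hfz.le
      _ = dualNorm f y * f z := mul_comm _ _

lemma eq_zero_of_dualNorm_nonpos {f : E d → ℝ} (h : IsNorm f) {y : E d}
    (hd : dualNorm f y ≤ 0) : y = 0 := by
  by_contra hy
  have h1 := inner_le_dualNorm_mul h y y
  rw [real_inner_self_eq_norm_sq] at h1
  have h2 : dualNorm f y * f y ≤ 0 := mul_nonpos_of_nonpos_of_nonneg hd (h.isSemi.nonneg y)
  have hy' : ‖y‖ ≠ 0 := norm_ne_zero_iff.2 hy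
  have h3 : (0:ℝ) < ‖y‖ ^ 2 := by positivity
  nlinarith

end Dual

section HB

variable {d : ℕ}

/-- Represent a linear functional on a finite-dimensional inner product space by a vector. -/
lemma exists_repr (Φ : E d →ₗ[ℝ] ℝ) : ∃ s : E d, ∀ z, ⟪s, z⟫ = Φ z := by
  refine ⟨(InnerProductSpace.toDual ℝ (E d)).symm (LinearMap.toContinuousLinearMap Φ), fun z => ?_⟩
  rw [InnerProductSpace.toDual_symm_apply]
  rfl

/-- Hahn-Banach: existence of a subgradient for a seminorm at `x0 ≠ 0`. -/
lemma exists_subgrad {F : E d → ℝ} (hF : IsSemi F) {x0 : E d} (hx0 : x0 ≠ 0) :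
    ∃ s : E d, (∀ z, ⟪s, z⟫ ≤ F z) ∧ ⟪s, x0⟫ = F x0 := by
  set f0 : E d →ₗ.[ℝ] ℝ := LinearPMap.mkSpanSingleton x0 (F x0) hx0 with hf0
  have hdom : ∀ v : f0.domain, f0 v ≤ F v := by
    rintro ⟨v, hv⟩
    obtain ⟨c, rfl⟩ := Submodule.mem_span_singleton.1 hv
    have h1 : f0 ⟨c • x0, hv⟩ = c • F x0 := LinearPMap.mkSpanSingleton'_apply _ _ _ c _
    rw [h1, smul_eq_mul]
    calc c * F x0 ≤ |c| * F x0 := mul_le_mul_of_nonneg_right (le_abs_self c) (hF.nonneg x0)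
      _ = F (c • x0) := (hF.2 c x0).symm
  obtain ⟨Φ, hΦeq, hΦle⟩ := exists_extension_of_le_sublinear f0 F
    (fun c hc x => by rw [hF.2 c x, abs_of_pos hc]) hF.1 hdom
  obtain ⟨s, hs⟩ := exists_repr Φ
  refine ⟨s, fun z => (hs z).trans_le (hΦle z), ?_⟩
  have hx0mem : x0 ∈ f0.domain := by
    rw [hf0]; exact Submodule.mem_span_singleton_self x0
  have h7 := hΦeq ⟨x0, hx0mem⟩
  have h8 : f0 ⟨x0, hx0mem⟩ = F x0 := LinearPMap.mkSpanSingleton_apply ℝ ℝ hx0 (F x0)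
  rw [hs x0, h7, h8]

/-- Sandwich / splitting lemma for two seminorms. -/
lemma split_two {p q : E d → ℝ} (hp : IsSemi p) (hq : IsSemi q) (s : E d)
    (h : ∀ z, ⟪s, z⟫ ≤ p z + q z) :
    ∃ x : E d, (∀ z, ⟪x, z⟫ ≤ p z) ∧ (∀ z, ⟪s - x, z⟫ ≤ q z) := by
  set N : E d × E d → ℝ := fun v => p v.1 + q v.2 with hN
  set diag : E d →ₗ[ℝ] E d × E d := LinearMap.prod LinearMap.id LinearMap.id with hdiag
  set D : Submodule ℝ (E d × E d) := LinearMap.range diag with hD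
  set ℓ : E d × E d →ₗ[ℝ] ℝ := (innerSL ℝ s).toLinearMap.comp (LinearMap.fst ℝ (E d) (E d)) with hℓ
  set f0 : (E d × E d) →ₗ.[ℝ] ℝ := ⟨D, ℓ.comp D.subtype⟩ with hf0
  have hdom : ∀ v : f0.domain, f0 v ≤ N v := by
    rintro ⟨v, hv⟩
    obtain ⟨z, rfl⟩ := hv
    have h1 : f0 ⟨diag z, ⟨z, rfl⟩⟩ = ⟪s, z⟫ := rfl
    rw [h1]
    exact h z
  obtain ⟨Φ, hΦeq, hΦle⟩ := exists_extension_of_le_sublinear f0 N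
    (fun c hc v => by
      simp only [hN, Prod.smul_fst, Prod.smul_snd, hp.2, hq.2, abs_of_pos hc]; ring)
    (fun v w => by
      simp only [hN, Prod.fst_add, Prod.snd_add]
      have := hp.1 v.1 w.1; have := hq.1 v.2 w.2; linarith) hdom
  obtain ⟨x, hx⟩ := exists_repr (Φ.comp (LinearMap.inl ℝ (E d) (E d)))
  have hxval : ∀ z, ⟪x, z⟫ = Φ (z, 0) := fun z => hx z
  have hΦdiag : ∀ z, Φ (z, z) = ⟪s, z⟫ := by
    intro z
    have := hΦeq ⟨diag z, ⟨z, rfl⟩⟩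
    exact this
  refine ⟨x, fun z => ?_, fun z => ?_⟩
  · have := hΦle (z, 0)
    rw [hxval z]
    simpa [hN, hq.zero] using this
  · have h1 : ⟪s - x, z⟫ = Φ (z, z) - Φ (z, 0) := by
      rw [inner_sub_left, hxval z, hΦdiag z]
    have h2 : Φ (z, z) - Φ (z, 0) = Φ (0, z) := by
      rw [← map_sub]
      norm_num
    have := hΦle (0, z)
    rw [h1, h2]
    simpa [hN, hp.zero] using this

/-- Splitting a linear functional dominated by a finite sum of seminorms. -/
lemma split_sum {k : ℕ} (p : Fin k → E d → ℝ) (hp : ∀ i, IsSemi (p i)) (S : Finset (Fin k))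
    (s : E d) (h : ∀ z, ⟪s, z⟫ ≤ ∑ i ∈ S, p i z) :
    ∃ x : Fin k → E d, s = ∑ i ∈ S, x i ∧ ∀ i, ∀ z, ⟪x i, z⟫ ≤ p i z := by
  classical
  induction S using Finset.cons_induction generalizing s with
  | empty =>
    have hs : s = 0 := by
      have := h s
      simp only [Finset.sum_empty] at this
      rw [real_inner_self_eq_norm_sq] at this
      have := norm_nonneg s
      have h2 : ‖s‖ = 0 := by nlinarith
      exact norm_eq_zero.1 h2
    exact ⟨fun _ => 0, by simp [hs], fun i z => by simp [(hp i).nonneg z]⟩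
  | cons a S ha ih =>
    have hq : IsSemi (fun z => ∑ i ∈ S, p i z) := by
      constructor
      · intro x y
        simp only [← Finset.sum_add_distrib]
        exact Finset.sum_le_sum fun i _ => (hp i).1 x y
      · intro c x
        rw [Finset.mul_sum]
        exact Finset.sum_congr rfl fun i _ => (hp i).2 c x
    have h' : ∀ z, ⟪s, z⟫ ≤ p a z + ∑ i ∈ S, p i z := by
      intro z; have := h z; rwa [Finset.sum_cons] at this
    obtain ⟨xa, hxa, hrest⟩ := split_two (hp a) hq s h'
    obtain ⟨x', hx'sum, hx'⟩ := ih (s - xa) hrest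
    refine ⟨Function.update x' a xa, ?_, ?_⟩
    · rw [Finset.sum_cons, Function.update_self]
      have : ∑ i ∈ S, Function.update x' a xa i = ∑ i ∈ S, x' i := by
        refine Finset.sum_congr rfl fun i hi => ?_
        refine Function.update_of_ne ?_ _ _
        rintro rfl; exact ha hi
      rw [this, ← hx'sum]
      abel
    · intro i z
      rcases eq_or_ne i a with rfl | hia
      · rw [Function.update_self]; exact hxa z
      · rw [Function.update_of_ne hia]; exact hx' i z

/-- For `g ∈ ℝ^d`, positive weights `λ`, and `x0 ≠ 0`, the Euclidean distance
of `g` to the cone generated by the subdifferential of the weighted sum norm at `x0` equals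
the minimum of `‖g − Σ_i x_i‖₂` over `τ ≥ 0` and `x_1, …, x_k` subject to
`Σ_i ⟨x_i, x0⟩ = τ ‖x0‖_sum,λ` and `‖x_i‖_(i)° ≤ τ λ_i` for all `i`. -/
theorem infDist_coneSubdiff_weightedSum_eq {d k : ℕ} (hk : 0 < k) (g : E d)
    (f : Fin k → E d → ℝ) (hf : ∀ i, IsNorm (f i))
    (lam : Fin k → ℝ) (hlam : ∀ i, 0 < lam i)
    (x0 : E d) (hx0 : x0 ≠ 0) :
    Metric.infDist g (posCone (subdiff (fun x => ∑ i, lam i * f i x) x0)) =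
      sInf {t : ℝ | ∃ τ : ℝ, 0 ≤ τ ∧ ∃ x : Fin k → E d,
        t = ‖g - ∑ i, x i‖ ∧
        (∑ i, ⟪x i, x0⟫) = τ * (∑ i, lam i * f i x0) ∧
        ∀ i, dualNorm (f i) (x i) ≤ τ * lam i} := by
  classical
  set F : E d → ℝ := fun x => ∑ i, lam i * f i x with hF
  have hFx0 : F x0 = ∑ i, lam i * f i x0 := rfl
  have hpsemi : ∀ i : Fin k, IsSemi (fun z => lam i * f i z) := fun i =>
    ⟨fun x y => by
        have h1 := (hf i).1 x y
        have h2 := (hlam i).le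
        simp only
        nlinarith,
      fun a x => by simp only [(hf i).2.1 a x]; ring⟩
  have hFsemi : IsSemi F := by
    constructor
    · intro x y
      simp only [hF, ← Finset.sum_add_distrib]
      exact Finset.sum_le_sum fun i _ => (hpsemi i).1 x y
    · intro a x
      simp only [hF]
      rw [Finset.mul_sum]
      exact Finset.sum_congr rfl fun i _ => (hpsemi i).2 a x
  -- characterization of the subdifferential of a seminorm
  have hsub : ∀ s : E d, s ∈ subdiff F x0 ↔ ((∀ z, ⟪s, z⟫ ≤ F z) ∧ ⟪s, x0⟫ = F x0) := by
    intro s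
    constructor
    · intro hs
      have h0 := hs 0
      rw [zero_sub, inner_neg_right, hFsemi.zero] at h0
      have h2 := hs (x0 + x0)
      rw [add_sub_cancel_right] at h2
      have hxx : F (x0 + x0) = 2 * F x0 := by
        have h := hFsemi.2 2 x0
        rw [two_smul] at h
        rw [h]
        norm_num
      rw [hxx] at h2
      have heq : ⟪s, x0⟫ = F x0 := le_antisymm (by linarith) (by linarith)
      refine ⟨fun z => ?_, heq⟩
      have h3 := hs z
      rw [inner_sub_right, heq] at h3
      linarith
    · rintro ⟨hle, heq⟩ z
      rw [inner_sub_right, heq]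
      have := hle z
      linarith
  obtain ⟨s0, hs0le, hs0eq⟩ := exists_subgrad hFsemi hx0
  have hs0mem : s0 ∈ subdiff F x0 := (hsub s0).2 ⟨hs0le, hs0eq⟩
  have hSne : (posCone (subdiff F x0)).Nonempty :=
    ⟨(1:ℝ) • s0, 1, one_pos, s0, hs0mem, rfl⟩
  have hTbdd : BddBelow {t : ℝ | ∃ τ : ℝ, 0 ≤ τ ∧ ∃ x : Fin k → E d,
      t = ‖g - ∑ i, x i‖ ∧
      (∑ i, ⟪x i, x0⟫) = τ * (∑ i, lam i * f i x0) ∧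
      ∀ i, dualNorm (f i) (x i) ≤ τ * lam i} := by
    refine ⟨0, ?_⟩
    rintro t ⟨τ, hτ, x, rfl, _, _⟩
    exact norm_nonneg _
  have hTne : {t : ℝ | ∃ τ : ℝ, 0 ≤ τ ∧ ∃ x : Fin k → E d,
      t = ‖g - ∑ i, x i‖ ∧
      (∑ i, ⟪x i, x0⟫) = τ * (∑ i, lam i * f i x0) ∧
      ∀ i, dualNorm (f i) (x i) ≤ τ * lam i}.Nonempty := by
    refine ⟨‖g - ∑ _i : Fin k, (0 : E d)‖, 0, le_refl 0, fun _ => 0, rfl, by simp, fun i => ?_⟩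
    rw [zero_mul]
    refine dualNorm_le (hf i).isSemi le_rfl fun x _ => ?_
    simp
  refine le_antisymm (le_csInf hTne ?_) ?_
  · -- infDist ≤ every element of T
    rintro t ⟨τ, hτ, x, rfl, hsum, hdual⟩
    rcases hτ.lt_or_eq with hτpos | hτ0
    · -- τ > 0
      set y := ∑ i, x i with hy
      have hinner : ∀ z, ⟪y, z⟫ ≤ τ * F z := by
        intro z
        rw [hy, sum_inner]
        have hstep : ∀ i : Fin k, ⟪x i, z⟫ ≤ (τ * lam i) * f i z := by
          intro i
          have h1 : ⟪z, x i⟫ ≤ dualNorm (f i) (x i) * f i z :=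
            inner_le_dualNorm_mul (hf i) (x i) z
          rw [real_inner_comm] at h1
          have h2 : dualNorm (f i) (x i) * f i z ≤ (τ * lam i) * f i z :=
            mul_le_mul_of_nonneg_right (hdual i) ((hf i).isSemi.nonneg z)
          linarith
        calc ∑ i, ⟪x i, z⟫ ≤ ∑ i, (τ * lam i) * f i z :=
              Finset.sum_le_sum fun i _ => hstep i
          _ = τ * F z := by
              simp only [hF]
              rw [Finset.mul_sum]
              exact Finset.sum_congr rfl fun i _ => by ring
      have hyx0 : ⟪y, x0⟫ = τ * F x0 := by
        rw [hy, sum_inner, hFx0]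
        exact hsum
      have hymem : y ∈ posCone (subdiff F x0) := by
        refine ⟨τ, hτpos, τ⁻¹ • y, (hsub _).2 ⟨fun z => ?_, ?_⟩,
          (smul_inv_smul₀ hτpos.ne' y).symm⟩
        · rw [real_inner_smul_left]
          have h1 := hinner z
          calc τ⁻¹ * ⟪y, z⟫ ≤ τ⁻¹ * (τ * F z) :=
                mul_le_mul_of_nonneg_left h1 (inv_nonneg.2 hτpos.le)
            _ = F z := by field_simp
        · rw [real_inner_smul_left, hyx0]
          field_simp
      have hid : Metric.infDist g (posCone (subdiff F x0)) ≤ dist g y :=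
        Metric.infDist_le_dist_of_mem hymem
      rwa [dist_eq_norm] at hid
    · -- τ = 0
      have hx0i : ∀ i, x i = 0 := by
        intro i
        refine eq_zero_of_dualNorm_nonpos (hf i) ?_
        have := hdual i
        rw [← hτ0, zero_mul] at this
        exact this
      have hsum0 : ∑ i, x i = 0 := by simp [hx0i]
      rw [hsum0, sub_zero]
      refine le_of_forall_pos_le_add fun ε hε => ?_
      have hδ : 0 < ε / (‖s0‖ + 1) := by positivity
      have hmem : (ε / (‖s0‖ + 1)) • s0 ∈ posCone (subdiff F x0) :=
        ⟨_, hδ, s0, hs0mem, rfl⟩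
      calc Metric.infDist g (posCone (subdiff F x0)) ≤ dist g ((ε / (‖s0‖ + 1)) • s0) :=
            Metric.infDist_le_dist_of_mem hmem
        _ = ‖g - (ε / (‖s0‖ + 1)) • s0‖ := dist_eq_norm _ _
        _ ≤ ‖g‖ + ‖(ε / (‖s0‖ + 1)) • s0‖ := norm_sub_le _ _
        _ ≤ ‖g‖ + ε := by
            rw [norm_smul, Real.norm_of_nonneg hδ.le]
            have h1 : ε / (‖s0‖ + 1) * ‖s0‖ ≤ ε := by
              rw [div_mul_eq_mul_div, div_le_iff₀ (by positivity)]
              nlinarith [norm_nonneg s0, hε.le]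
            linarith
  · -- sInf T ≤ infDist
    rw [Metric.infDist_eq_iInf]
    haveI : Nonempty ↥(posCone (subdiff F x0)) := hSne.to_subtype
    refine le_ciInf ?_
    rintro ⟨yy, τ, hτpos, s, hsmem, rfl⟩
    obtain ⟨hle, heq⟩ := (hsub s).1 hsmem
    obtain ⟨x', hx'sum, hx'⟩ := split_sum (fun i z => lam i * f i z) hpsemi Finset.univ s
      (fun z => by simpa [hF] using hle z)
    refine csInf_le hTbdd ⟨τ, hτpos.le, fun i => τ • x' i, ?_, ?_, ?_⟩
    · rw [dist_eq_norm]
      congr 2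
      rw [← Finset.smul_sum, ← hx'sum]
    · have h1 : ∑ i, ⟪τ • x' i, x0⟫ = τ * ⟪s, x0⟫ := by
        simp only [real_inner_smul_left, ← Finset.mul_sum]
        congr 1
        rw [← sum_inner, ← hx'sum]
      rw [h1, heq, hFx0]
    · intro i
      refine dualNorm_le (hf i).isSemi (mul_nonneg hτpos.le (hlam i).le) fun w hw => ?_
      have h1 : ⟪x' i, w⟫ ≤ lam i * f i w := hx' i w
      have h2 : τ * (lam i * f i w) ≤ τ * lam i := by
        have h3 := mul_le_mul_of_nonneg_left hw (mul_nonneg hτpos.le (hlam i).le)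
        nlinarith
      calc ⟪w, τ • x' i⟫ = τ * ⟪x' i, w⟫ := by
            rw [real_inner_comm, real_inner_smul_left]
        _ ≤ τ * (lam i * f i w) := mul_le_mul_of_nonneg_left h1 hτpos.le
        _ ≤ τ * lam i := h2
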